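/- Let q = 2^b be a power of 2, let g(X) ∈ 𝔽_q[X] have degree at most d, and let G(X) = Σ_{i=0}^{b−1} g(X)^{2^i}. Let ℓ ≥ 1 be an integer and write ℓ = 2^s·(2s'+1) with s, s' ≥ 0. Then the ℓ-th Hasse derivative of G satisfies G^{[ℓ]}(X) = Σ_{i=0}^{min(s, b−1)} (g^{[ℓ/2^i]}(X))^{2^i}, and in particular G^{[ℓ]}(X) has degree at most d·2^s ≤ d·ℓ. -/

import Mathlib

open Polynomial

lemma cast_choose_two_mul {F : Type*} [Field F] [CharP F 2] (a c : ℕ) :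
    ((Nat.choose (2 * a) (2 * c) : F)) = (Nat.choose a c : F) := by
  apply CharP.natCast_eq_natCast' F 2
  have h := Choose.choose_modEq_choose_mod_mul_choose_div_nat (p := 2) (n := 2 * a) (k := 2 * c)
  simpa [Nat.mul_mod_right, Nat.mul_div_cancel_left] using h

lemma cast_choose_even_odd {F : Type*} [Field F] [CharP F 2] (n k : ℕ)
    (hn : 2 ∣ n) (hk : ¬ 2 ∣ k) : ((Nat.choose n k : F)) = 0 := by
  rw [CharP.cast_eq_zero_iff F 2]
  have h := Choose.choose_modEq_choose_mod_mul_choose_div_nat (p := 2) (n := n) (k := k)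
  have hn' : n % 2 = 0 := by omega
  have hk' : k % 2 = 1 := by omega
  rw [hn', hk'] at h
  simpa [Nat.ModEq, Nat.dvd_iff_mod_eq_zero] using h

lemma sq_natCast {F : Type*} [Field F] [CharP F 2] (c : ℕ) : ((c : F)) ^ 2 = (c : F) := by
  rw [← Nat.cast_pow]
  apply CharP.natCast_eq_natCast' F 2
  show c ^ 2 % 2 = c % 2
  rcases Nat.even_or_odd c with ⟨m, rfl⟩ | ⟨m, rfl⟩ <;> ring_nf <;> omega

lemma coeff_sq {F : Type*} [Field F] [CharP F 2] (f : F[X]) (m : ℕ) :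
    (f ^ 2).coeff m = if 2 ∣ m then (f.coeff (m / 2)) ^ 2 else 0 := by
  rw [← map_frobenius_expand 2 f, coeff_map, coeff_expand (by norm_num)]
  split_ifs <;> simp [frobenius_def]

lemma hasseDeriv_sq {F : Type*} [Field F] [CharP F 2] (f : F[X]) (k : ℕ) :
    hasseDeriv k (f ^ 2) = if 2 ∣ k then (hasseDeriv (k / 2) f) ^ 2 else 0 := by
  ext n
  rw [hasseDeriv_coeff]
  split_ifs with hk
  · obtain ⟨c, rfl⟩ := hk
    rw [coeff_sq, coeff_sq]
    rcases Nat.even_or_odd n with ⟨m, rfl⟩ | ⟨m, rfl⟩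
    · have h1 : 2 ∣ m + m + 2 * c := by omega
      rw [if_pos h1, if_pos (by omega : 2 ∣ m + m)]
      have hm : (m + m + 2 * c) / 2 = m + c := by omega
      have hm2 : (m + m) / 2 = m := by omega
      rw [hm, hm2, hasseDeriv_coeff, mul_pow, Nat.mul_div_cancel_left c (by norm_num)]
      have h2 : m + m + 2 * c = 2 * (m + c) := by ring
      rw [h2, cast_choose_two_mul, sq_natCast]
    · have h1 : ¬ 2 ∣ 2 * m + 1 + 2 * c := by omega
      have h2 : ¬ 2 ∣ 2 * m + 1 := by omega
      rw [if_neg h1, if_neg h2, mul_zero]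
  · rw [coeff_zero, coeff_sq]
    split_ifs with h1
    · rw [cast_choose_even_odd _ _ h1 hk, zero_mul]
    · rw [mul_zero]

lemma hasseDeriv_pow_two_pow {F : Type*} [Field F] [CharP F 2] (f : F[X]) (i k : ℕ) :
    hasseDeriv k (f ^ 2 ^ i) =
      if 2 ^ i ∣ k then (hasseDeriv (k / 2 ^ i) f) ^ 2 ^ i else 0 := by
  induction i generalizing k with
  | zero => simp
  | succ i ih =>
    have hf : f ^ 2 ^ (i + 1) = (f ^ 2 ^ i) ^ 2 := by rw [← pow_mul, ← pow_succ]
    have hpow : (2 : ℕ) ^ (i + 1) = 2 * 2 ^ i := by rw [pow_succ]; ring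
    rw [hf, hasseDeriv_sq]
    by_cases h2 : 2 ∣ k
    · rw [if_pos h2, ih]
      by_cases h3 : 2 ^ i ∣ k / 2
      · rw [if_pos h3, if_pos (by rw [hpow]; exact (Nat.dvd_div_iff_mul_dvd h2).mp h3),
          ← pow_mul, ← pow_succ]
        congr 2
        rw [Nat.div_div_eq_div_mul, hpow, mul_comm]
      · rw [if_neg h3, if_neg (by rw [hpow]; exact fun h => h3 ((Nat.dvd_div_iff_mul_dvd h2).mpr h)),
          zero_pow two_ne_zero]
    · rw [if_neg h2, if_neg (fun h => h2 (dvd_trans (dvd_pow_self 2 (Nat.succ_ne_zero i)) h))]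

theorem stmt4 {F : Type*} [Field F] [Fintype F] (b : ℕ) (hq : Fintype.card F = 2 ^ b)
    (d : ℕ) (g : F[X]) (hg : g.degree ≤ (d : ℕ))
    (G : F[X]) (hG : G = ∑ i ∈ Finset.range b, g ^ 2 ^ i)
    (ℓ s s' : ℕ) (hℓ1 : 1 ≤ ℓ) (hℓ : ℓ = 2 ^ s * (2 * s' + 1)) :
    hasseDeriv ℓ G = ∑ i ∈ Finset.range (min s (b - 1) + 1), (hasseDeriv (ℓ / 2 ^ i) g) ^ 2 ^ i
      ∧ (hasseDeriv ℓ G).degree ≤ ((d * 2 ^ s : ℕ) : WithBot ℕ)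
      ∧ d * 2 ^ s ≤ d * ℓ := by
  -- b ≥ 1
  have hb : 1 ≤ b := by
    by_contra h
    have hb0 : b = 0 := by omega
    have h2 : (1 : ℕ) < Fintype.card F := Fintype.one_lt_card
    rw [hq, hb0] at h2
    simp at h2
  -- char F = 2
  haveI : CharP F 2 := by
    have h0 : ((2 ^ b : ℕ) : F) = 0 := by
      rw [← hq]; exact FiniteField.cast_card_eq_zero F
    haveI := ringChar.charP F
    have hdvd : ringChar F ∣ 2 ^ b := (CharP.cast_eq_zero_iff F (ringChar F) _).mp h0
    have hp : (ringChar F).Prime := CharP.char_is_prime F (ringChar F)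
    have : ringChar F = 2 :=
      (Nat.prime_dvd_prime_iff_eq hp Nat.prime_two).mp (hp.dvd_of_dvd_pow hdvd)
    exact this ▸ ringChar.charP F
  have hdvd_iff : ∀ i : ℕ, 2 ^ i ∣ ℓ ↔ i ≤ s := by
    intro i
    subst hℓ
    constructor
    · intro h
      by_contra hlt
      push_neg at hlt
      have h1 : 2 ^ (s + 1) ∣ 2 ^ s * (2 * s' + 1) := dvd_trans (pow_dvd_pow 2 hlt) h
      rw [pow_succ] at h1
      have h2 := (Nat.mul_dvd_mul_iff_left (Nat.pow_pos (n := s) (by norm_num : 0 < 2))).mp h1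
      omega
    · intro h
      exact Dvd.dvd.mul_right (pow_dvd_pow 2 h) _
  have hset : (Finset.range b).filter (fun i => i ≤ s) = Finset.range (min s (b - 1) + 1) := by
    ext x
    simp only [Finset.mem_filter, Finset.mem_range]
    omega
  have heq : hasseDeriv ℓ G
      = ∑ i ∈ Finset.range (min s (b - 1) + 1), (hasseDeriv (ℓ / 2 ^ i) g) ^ 2 ^ i := by
    rw [hG, map_sum]
    have e1 : ∑ i ∈ Finset.range b, hasseDeriv ℓ (g ^ 2 ^ i)
        = ∑ i ∈ Finset.range b,
            if i ≤ s then (hasseDeriv (ℓ / 2 ^ i) g) ^ 2 ^ i else 0 :=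
      Finset.sum_congr rfl fun i _ => by
        rw [hasseDeriv_pow_two_pow, if_congr (hdvd_iff i) rfl rfl]
    rw [e1, ← Finset.sum_filter, hset]
  have hdeg1 : ∀ k : ℕ, (hasseDeriv k g).degree ≤ ((d : ℕ) : WithBot ℕ) := by
    intro k
    refine (degree_le_iff_coeff_zero _ _).mpr fun m hm => ?_
    rw [hasseDeriv_coeff]
    have hmd : g.degree < (m + k : ℕ) := by
      refine lt_of_le_of_lt hg (lt_of_lt_of_le hm ?_)
      exact_mod_cast Nat.cast_le.mpr (Nat.le_add_right m k)
    rw [coeff_eq_zero_of_degree_lt hmd, mul_zero]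
  refine ⟨heq, ?_, ?_⟩
  · rw [heq]
    refine (degree_sum_le _ _).trans (Finset.sup_le fun i hi => ?_)
    have his : i ≤ s := by
      simp only [Finset.mem_range] at hi; omega
    calc ((hasseDeriv (ℓ / 2 ^ i) g) ^ 2 ^ i).degree
        ≤ 2 ^ i • (hasseDeriv (ℓ / 2 ^ i) g).degree := degree_pow_le _ _
      _ ≤ 2 ^ i • ((d : ℕ) : WithBot ℕ) := nsmul_le_nsmul_right (hdeg1 _) _
      _ = ((2 ^ i * d : ℕ) : WithBot ℕ) := by
          rw [nsmul_eq_mul]; push_cast; ring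
      _ ≤ ((d * 2 ^ s : ℕ) : WithBot ℕ) := by
          refine Nat.cast_le.mpr ?_
          rw [mul_comm]
          exact Nat.mul_le_mul_left d (Nat.pow_le_pow_right (by norm_num) his)
  · refine Nat.mul_le_mul_left d ?_
    rw [hℓ]
    exact Nat.le_mul_of_pos_right _ (by omega)
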